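/- For every z > 0, b(z) := ∫₀^∞ √(s² + z²) · s · e^{−s²/2} ds equals e^{z²/2} · √(π/2) · erfc(z/√2) + z. -/

import Mathlib

open MeasureTheory Real

/-- The complementary error function `erfc(x) = (2/√π) ∫ₓ^∞ e^{−t²} dt`. -/
noncomputable def erfc (x : ℝ) : ℝ :=
  (2 / Real.sqrt Real.pi) * ∫ t in Set.Ioi x, Real.exp (-t ^ 2)

lemma hasDerivAt_sqrt_sq_add (z : ℝ) (hz : 0 < z) (s : ℝ) :
    HasDerivAt (fun s => Real.sqrt (s ^ 2 + z ^ 2))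
      (s / Real.sqrt (s ^ 2 + z ^ 2)) s := by
  have hpos : 0 < s ^ 2 + z ^ 2 := by positivity
  have h1 : HasDerivAt (fun s : ℝ => s ^ 2 + z ^ 2) (2 * s) s := by
    simpa using ((hasDerivAt_pow 2 s).add_const (z ^ 2))
  have h2 := (Real.hasDerivAt_sqrt hpos.ne').comp s h1
  refine h2.congr_deriv ?_
  have hs : Real.sqrt (s ^ 2 + z ^ 2) ≠ 0 := by positivity
  field_simp

/-- For `z > 0`, `b(z) = ∫₀^∞ √(s²+z²) s e^{−s²/2} ds = e^{z²/2} √(π/2) erfc(z/√2) + z`. -/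
theorem b_eq_erfc_add (z : ℝ) (hz : 0 < z) :
    (∫ s in Set.Ioi (0:ℝ), Real.sqrt (s ^ 2 + z ^ 2) * s * Real.exp (-s ^ 2 / 2)) =
      Real.exp (z ^ 2 / 2) * Real.sqrt (Real.pi / 2) * erfc (z / Real.sqrt 2) + z := by
  have h2 : (0:ℝ) < Real.sqrt 2 := by positivity
  -- Step 1: change of variables v = √(s²+z²)
  have himg : (fun s : ℝ => Real.sqrt (s ^ 2 + z ^ 2)) '' Set.Ioi 0 = Set.Ioi z := by
    ext v
    constructor
    · rintro ⟨s, hs, rfl⟩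
      have hs' : 0 < s := hs
      have : z ^ 2 < s ^ 2 + z ^ 2 := by nlinarith
      have := Real.sqrt_lt_sqrt (by positivity) this
      rwa [Real.sqrt_sq hz.le] at this
    · intro hv
      have hzv : z < v := hv
      refine ⟨Real.sqrt (v ^ 2 - z ^ 2), ?_, ?_⟩
      · have : 0 < v ^ 2 - z ^ 2 := by nlinarith
        exact Real.sqrt_pos.mpr this
      · have h0 : (0:ℝ) ≤ v ^ 2 - z ^ 2 := by nlinarith
        simp only
        rw [Real.sq_sqrt h0, sub_add_cancel, Real.sqrt_sq (by linarith)]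
  have hinj : Set.InjOn (fun s : ℝ => Real.sqrt (s ^ 2 + z ^ 2)) (Set.Ioi 0) := by
    have : StrictMonoOn (fun s : ℝ => Real.sqrt (s ^ 2 + z ^ 2)) (Set.Ioi 0) := by
      intro a ha b hb hab
      apply Real.sqrt_lt_sqrt (by positivity)
      have ha' : (0:ℝ) < a := ha
      nlinarith
    exact this.injOn
  have key : (∫ v in Set.Ioi z, v ^ 2 * Real.exp ((z ^ 2 - v ^ 2) / 2))
      = ∫ s in Set.Ioi (0:ℝ), Real.sqrt (s ^ 2 + z ^ 2) * s * Real.exp (-s ^ 2 / 2) := by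
    rw [← himg]
    rw [integral_image_eq_integral_abs_deriv_smul measurableSet_Ioi
      (fun s _ => (hasDerivAt_sqrt_sq_add z hz s).hasDerivWithinAt) hinj
      (fun v => v ^ 2 * Real.exp ((z ^ 2 - v ^ 2) / 2))]
    apply setIntegral_congr_fun measurableSet_Ioi
    intro s hs
    have hs' : (0:ℝ) < s := hs
    have hpos : (0:ℝ) < s ^ 2 + z ^ 2 := by positivity
    have hsq : Real.sqrt (s ^ 2 + z ^ 2) ^ 2 = s ^ 2 + z ^ 2 := Real.sq_sqrt hpos.le
    have hsqrt : (0:ℝ) < Real.sqrt (s ^ 2 + z ^ 2) := Real.sqrt_pos.mpr hpos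
    simp only [smul_eq_mul]
    rw [hsq, abs_of_pos (div_pos hs' hsqrt)]
    rw [show z ^ 2 - (s ^ 2 + z ^ 2) = -s ^ 2 by ring]
    rw [div_mul_eq_mul_div, div_eq_iff hsqrt.ne']
    have hss : Real.sqrt (s ^ 2 + z ^ 2) * Real.sqrt (s ^ 2 + z ^ 2) = s ^ 2 + z ^ 2 :=
      Real.mul_self_sqrt hpos.le
    linear_combination (s * Real.exp (-s ^ 2 / 2)) * hss - 2 * (s * Real.exp (-s ^ 2 / 2)) * hsq
  -- integrability facts
  have hI1 : IntegrableOn (fun v : ℝ => Real.exp (-v ^ 2 / 2)) (Set.Ioi z) := by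
    have := (integrable_exp_neg_mul_sq (by norm_num : (0:ℝ) < 1/2)).integrableOn
      (s := Set.Ioi z)
    refine this.congr_fun (fun x _ => ?_) measurableSet_Ioi
    ring_nf
  have hI2 : IntegrableOn (fun v : ℝ => v ^ 2 * Real.exp (-v ^ 2 / 2)) (Set.Ioi z) := by
    have := (integrable_rpow_mul_exp_neg_mul_sq (by norm_num : (0:ℝ) < 1/2)
      (by norm_num : (-1:ℝ) < 2)).integrableOn (s := Set.Ioi z)
    refine this.congr_fun (fun x hx => ?_) measurableSet_Ioi
    have hx' : (0:ℝ) < x := lt_trans hz hx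
    beta_reduce
    rw [show ((2:ℝ)) = ((2:ℕ) : ℝ) by norm_num, Real.rpow_natCast]
    ring_nf
  have hI3 : IntegrableOn (fun v : ℝ => (v ^ 2 - 1) * Real.exp (-v ^ 2 / 2)) (Set.Ioi z) := by
    have heq : (fun v : ℝ => (v ^ 2 - 1) * Real.exp (-v ^ 2 / 2))
        = (fun v : ℝ => v ^ 2 * Real.exp (-v ^ 2 / 2)) - (fun v : ℝ => Real.exp (-v ^ 2 / 2)) := by
      funext v; simp only [Pi.sub_apply]; ring
    rw [IntegrableOn, heq]
    exact hI2.sub hI1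
  -- Step 2: integration by parts
  have ibp : (∫ v in Set.Ioi z, (v ^ 2 - 1) * Real.exp (-v ^ 2 / 2))
      = z * Real.exp (-z ^ 2 / 2) := by
    have hderiv : ∀ x ∈ Set.Ici z, HasDerivAt (fun v : ℝ => -v * Real.exp (-v ^ 2 / 2))
        ((x ^ 2 - 1) * Real.exp (-x ^ 2 / 2)) x := by
      intro x _
      have h1 : HasDerivAt (fun v : ℝ => -v ^ 2 / 2) (-x) x := by
        have := (hasDerivAt_pow 2 x).neg.div_const 2
        refine this.congr_deriv ?_
        push_cast; ring
      have h2 : HasDerivAt (fun v : ℝ => Real.exp (-v ^ 2 / 2))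
          (Real.exp (-x ^ 2 / 2) * (-x)) x := (Real.hasDerivAt_exp _).comp x h1
      have h3 := (hasDerivAt_id x).neg.mul h2
      refine h3.congr_deriv ?_
      simp only [Pi.neg_apply, id_eq]
      ring
    have htend : Filter.Tendsto (fun v : ℝ => -v * Real.exp (-v ^ 2 / 2))
        Filter.atTop (nhds 0) := by
      have hO : (fun x : ℝ => x ^ (1:ℝ) * Real.exp (-(1/2) * x ^ 2)) =o[Filter.atTop]
          (fun x : ℝ => Real.exp (-(1/2) * x)) :=
        rpow_mul_exp_neg_mul_sq_isLittleO_exp_neg (by norm_num) 1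
      have hexp : Filter.Tendsto (fun x : ℝ => Real.exp (-(1/2) * x))
          Filter.atTop (nhds 0) := by
        have h1 : Filter.Tendsto (fun x : ℝ => (1/2 : ℝ) * x) Filter.atTop Filter.atTop :=
          Filter.Tendsto.const_mul_atTop (by norm_num) Filter.tendsto_id
        have h2' : Filter.Tendsto (fun x : ℝ => -(1/2 : ℝ) * x) Filter.atTop Filter.atBot := by
          simpa [neg_mul] using Filter.tendsto_neg_atBot_iff.mpr h1
        exact Real.tendsto_exp_comp_nhds_zero.mpr h2'
      have hten := (hO.trans_tendsto hexp).neg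
      rw [neg_zero] at hten
      apply hten.congr'
      filter_upwards [Filter.eventually_gt_atTop (0:ℝ)] with x hx
      rw [Real.rpow_one]
      ring_nf
    have := integral_Ioi_of_hasDerivAt_of_tendsto'
      (f' := fun x => (x ^ 2 - 1) * Real.exp (-x ^ 2 / 2)) hderiv hI3 htend
    rw [this]; ring
  -- Step 3: scaling
  have hscale : (∫ v in Set.Ioi z, Real.exp (-v ^ 2 / 2))
      = Real.sqrt 2 * ∫ t in Set.Ioi (z / Real.sqrt 2), Real.exp (-t ^ 2) := by
    have hb : (0:ℝ) < (Real.sqrt 2)⁻¹ := by positivity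
    have := integral_comp_mul_left_Ioi (fun t : ℝ => Real.exp (-t ^ 2)) z hb
    rw [inv_inv] at this
    have heq : ∀ v : ℝ, Real.exp (-((Real.sqrt 2)⁻¹ * v) ^ 2) = Real.exp (-v ^ 2 / 2) := by
      intro v
      congr 1
      rw [mul_pow, ← Real.sqrt_inv, Real.sq_sqrt (by norm_num : (0:ℝ) ≤ 2⁻¹)]
      ring
    calc (∫ v in Set.Ioi z, Real.exp (-v ^ 2 / 2))
        = ∫ v in Set.Ioi z, Real.exp (-((Real.sqrt 2)⁻¹ * v) ^ 2) := by
          apply setIntegral_congr_fun measurableSet_Ioi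
          intro v _; exact (heq v).symm
      _ = Real.sqrt 2 • ∫ t in Set.Ioi ((Real.sqrt 2)⁻¹ * z), Real.exp (-t ^ 2) := this
      _ = Real.sqrt 2 * ∫ t in Set.Ioi (z / Real.sqrt 2), Real.exp (-t ^ 2) := by
          rw [smul_eq_mul, inv_mul_eq_div]
  -- combine
  have split : (∫ v in Set.Ioi z, v ^ 2 * Real.exp (-v ^ 2 / 2))
      = z * Real.exp (-z ^ 2 / 2) + ∫ v in Set.Ioi z, Real.exp (-v ^ 2 / 2) := by
    rw [← ibp, ← integral_add hI3 hI1]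
    apply setIntegral_congr_fun measurableSet_Ioi
    intro v _; ring
  have factor : (∫ v in Set.Ioi z, v ^ 2 * Real.exp ((z ^ 2 - v ^ 2) / 2))
      = Real.exp (z ^ 2 / 2) * ∫ v in Set.Ioi z, v ^ 2 * Real.exp (-v ^ 2 / 2) := by
    rw [← integral_const_mul]
    apply setIntegral_congr_fun measurableSet_Ioi
    intro v _
    show v ^ 2 * Real.exp ((z ^ 2 - v ^ 2) / 2) = Real.exp (z ^ 2 / 2) * (v ^ 2 * Real.exp (-v ^ 2 / 2))
    rw [show (z ^ 2 - v ^ 2) / 2 = z ^ 2 / 2 + -v ^ 2 / 2 by ring, Real.exp_add]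
    ring
  have hsqpi : Real.sqrt (Real.pi / 2) * (2 / Real.sqrt Real.pi) = Real.sqrt 2 := by
    have hpi : (0:ℝ) < Real.sqrt Real.pi := Real.sqrt_pos.mpr Real.pi_pos
    rw [show Real.sqrt (Real.pi / 2) = Real.sqrt Real.pi / Real.sqrt 2 from
      Real.sqrt_div Real.pi_pos.le 2]
    field_simp
    nlinarith [Real.mul_self_sqrt (by norm_num : (0:ℝ) ≤ 2)]
  rw [← key, factor, split, hscale, erfc]
  set E := ∫ t in Set.Ioi (z / Real.sqrt 2), Real.exp (-t ^ 2) with hE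
  have hmul : Real.exp (z ^ 2 / 2) * Real.exp (-z ^ 2 / 2) = 1 := by
    rw [← Real.exp_add, show z ^ 2 / 2 + -z ^ 2 / 2 = 0 by ring, Real.exp_zero]
  linear_combination z * hmul - Real.exp (z ^ 2 / 2) * E * hsqpi
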